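/- Let n ≥ 1 and let λ, μ ∈ ℤⁿ be weakly decreasing sequences (dominant coweights for GL_n) such that λ = μ + ϖ_t, where ϖ_t = (1,...,1,0,...,0) with t ones, 1 ≤ t ≤ n-1. If λ' ∈ ℤⁿ is another weakly decreasing sequence with λ' ⪯ λ (dominance order), then the weakly decreasing rearrangement of λ' - ϖ_t satisfies dom(λ' - ϖ_t) ⪯ μ. -/
import Mathlib


open Finset

/-- Standard basis vector `e_j` in `ℤⁿ`. -/
def ev (n : ℕ) (j : Fin n) : Fin n → ℤ := fun k => if k = j then 1 else 0

/-- The coweight `ϖ_t = e_1 + ⋯ + e_t` (t ones followed by zeros). -/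
def varpi (n t : ℕ) : Fin n → ℤ := fun j => if (j : ℕ) < t then 1 else 0

/-- Dominance order `μ ⪯ λ`: equal total sums, partial sums of `μ` bounded by those of `λ`. -/
def DomLE {n : ℕ} (μ lam : Fin n → ℤ) : Prop :=
  (∑ i, μ i = ∑ i, lam i) ∧
  ∀ k : Fin n, ∑ i ∈ Finset.Iic k, μ i ≤ ∑ i ∈ Finset.Iic k, lam i

/-- A coweight is dominant iff its coordinates are weakly decreasing. -/
def IsDominant {n : ℕ} (v : Fin n → ℤ) : Prop := ∀ i j : Fin n, i ≤ j → v j ≤ v i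

/-- The weakly decreasing rearrangement `dom(v)` of `v`. -/
noncomputable def domOf {n : ℕ} (v : Fin n → ℤ) : Fin n → ℤ :=
  v ∘ Tuple.sort (fun i => -v i)

/-- `succA x i` is `x^{(i+1)}`, with the convention `x^{(n+1)} = x^{(1)} + (1,…,1)`. -/
def succA {n : ℕ} (x : Fin n → Fin n → ℤ) (i : Fin n) : Fin n → ℤ :=
  if h : (i : ℕ) + 1 < n then x ⟨(i : ℕ) + 1, h⟩ else fun j => x ⟨0, i.pos⟩ j + 1

/-- A tuple `(x^{(1)},…,x^{(n)})` is an alcove. -/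
def IsAlcove {n : ℕ} (x : Fin n → Fin n → ℤ) : Prop :=
  (∀ i : Fin n, ∀ j, x i j ≤ succA x i j) ∧
  (∀ i : Fin n, (i : ℕ) + 1 < n → ∑ j, succA x i j = (∑ j, x i j) + 1)

/-- `P` is the permutation `P(x)` of the alcove `x`: `x^{(i+1)} = x^{(i)} + e_{P(x)(i)}`. -/
def IsPermOf {n : ℕ} (x : Fin n → Fin n → ℤ) (P : Equiv.Perm (Fin n)) : Prop :=
  ∀ i : Fin n, ∀ j, succA x i j = x i j + ev n (P i) j

/-- A permutation acts on `ℤⁿ` by permuting coordinates: `(σv)_{σ(i)} = v_i`. -/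
def permAct {n : ℕ} (σ : Equiv.Perm (Fin n)) (v : Fin n → ℤ) : Fin n → ℤ :=
  fun j => v (σ.symm j)

/-- The `n`-cycle `c = (1 2 ⋯ n)`. -/
def cyc (n : ℕ) [NeZero n] : Equiv.Perm (Fin n) := Equiv.addRight 1

/-- Rotation of alcoves. -/
def rotA {n : ℕ} [NeZero n] (x : Fin n → Fin n → ℤ) : Fin n → Fin n → ℤ := fun i =>
  if h : (i : ℕ) + 1 < n then
    permAct (cyc n)⁻¹ (fun j => x ⟨(i : ℕ) + 1, h⟩ j - varpi n 1 j)
  else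
    fun j => permAct (cyc n)⁻¹ (x 0) j + varpi n (n - 1) j

/-- An alcove is `λ`-permissible if `dom(x^{(i)} - ϖ_{i-1}) ⪯ λ` for all `i`. -/
noncomputable def Permissible {n : ℕ} (lam : Fin n → ℤ) (x : Fin n → Fin n → ℤ) : Prop :=
  ∀ i : Fin n, DomLE (domOf (fun j => x i j - varpi n (i : ℕ) j)) lam

/-- The Kottwitz–Rapoport relation `i ⊴_x j` (six-case rule). -/
def TriLE {n : ℕ} (x : Fin n → Fin n → ℤ) (P : Equiv.Perm (Fin n)) (i j : Fin n) : Prop :=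
  (x ⟨0, i.pos⟩ j < x ⟨0, i.pos⟩ i) ∨
  (x ⟨0, i.pos⟩ i = x ⟨0, i.pos⟩ j ∧
    ((P.symm i < i ∧ P.symm j < j ∧ j ≤ i) ∨
     (P.symm i < i ∧ j ≤ P.symm j) ∨
     (P.symm i = i ∧ P.symm j = j ∧ i = j) ∨
     (P.symm i = i ∧ j < P.symm j) ∨
     (i < P.symm i ∧ j < P.symm j ∧ j ≤ i)))
lemma ind_sum (t k : ℕ) : ∑ i ∈ Finset.range k, (if i < t then (1:ℤ) else 0) = (min k t : ℕ) := by
  induction k with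
  | zero => simp
  | succ k ih =>
    rw [Finset.sum_range_succ, ih]
    split_ifs with h
    · have h1 : min (k+1) t = min k t + 1 := by omega
      rw [h1]; push_cast; ring
    · have h1 : min (k+1) t = min k t := by omega
      rw [h1]; ring

lemma sum_subset_le_initial (a : ℕ → ℤ) (p N : ℕ)
    (ha : ∀ i j, i ≤ j → j < N → a j ≤ a i) :
    ∀ (T : Finset ℕ), (∀ j ∈ T, p ≤ j ∧ j < N) →
      ∑ j ∈ T, a j ≤ ∑ i ∈ Finset.range T.card, a (p + i) := by
  intro T
  induction T using Finset.strongInduction with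
  | _ T ih =>
    intro hT
    rcases T.eq_empty_or_nonempty with rfl | hne
    · simp
    · set M := T.max' hne with hMdef
      have hM : M ∈ T := T.max'_mem hne
      have hcard : T.card ≤ M + 1 - p := by
        have hsub : T ⊆ Finset.Icc p M :=
          fun j hj => Finset.mem_Icc.2 ⟨(hT j hj).1, Finset.le_max' T j hj⟩
        calc T.card ≤ (Finset.Icc p M).card := Finset.card_le_card hsub
          _ = M + 1 - p := Nat.card_Icc p M
      have h1 : 1 ≤ T.card := Finset.card_pos.2 hne
      have hpM : p ≤ M := (hT M hM).1
      have key : p + (T.card - 1) ≤ M := by omega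
      have hMN : M < N := (hT M hM).2
      have haM : a M ≤ a (p + (T.card - 1)) := ha _ _ key hMN
      have herase := ih (T.erase M) (Finset.erase_ssubset hM)
        (fun j hj => hT j (Finset.mem_of_mem_erase hj))
      rw [Finset.card_erase_of_mem hM] at herase
      have hsplit : ∑ j ∈ T, a j = ∑ j ∈ T.erase M, a j + a M :=
        (Finset.sum_erase_add T a hM).symm
      have hrange : ∑ i ∈ Finset.range T.card, a (p+i)
          = ∑ i ∈ Finset.range (T.card - 1), a (p+i) + a (p + (T.card-1)) := by
        conv_lhs => rw [show T.card = T.card - 1 + 1 by omega]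
        rw [Finset.sum_range_succ]
      rw [hsplit, hrange]
      exact add_le_add herase haM

lemma range_Ico_split (f : ℕ → ℤ) (p q : ℕ) (h : p ≤ q) :
    ∑ i ∈ Finset.range p, f i + ∑ i ∈ Finset.Ico p q, f i = ∑ i ∈ Finset.range q, f i := by
  simp only [Finset.range_eq_Ico]
  exact Finset.sum_Ico_consecutive f (Nat.zero_le p) h

lemma main_ineq (n t : ℕ) (a u : ℕ → ℤ)
    (ht : 1 ≤ t) (htn : t + 1 ≤ n)
    (ha : ∀ i j : ℕ, i ≤ j → j < n → a j ≤ a i)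
    (hu : ∀ i j : ℕ, i ≤ j → j < n → u j ≤ u i)
    (hdom : ∀ k, k ≤ n →
      ∑ i ∈ Finset.range k, a i ≤ (∑ i ∈ Finset.range k, u i) + ((min k t : ℕ) : ℤ))
    (K : ℕ) (hK : K ≤ n) :
    ∀ d m, m + d = min K t → K - m ≤ n - t →
      (∑ i ∈ Finset.range m, a i) - m + (∑ i ∈ Finset.range (K-m), a (t + i))
        ≤ ∑ i ∈ Finset.range K, u i := by
  intro d
  induction d with
  | zero =>
    intro m hm hKm
    simp only [Nat.add_zero] at hm
    rcases le_or_gt K t with h | h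
    · have hmK : m = K := by omega
      have hd := hdom K hK
      have hmin : min K t = K := by omega
      rw [hmin] at hd
      rw [hmK]
      simp only [Nat.sub_self, Finset.range_zero, Finset.sum_empty, add_zero]
      linarith
    · have hmt : m = t := by omega
      have htail : ∑ i ∈ Finset.range (K - t), a (t + i) = ∑ i ∈ Finset.Ico t K, a i := by
        rw [Finset.sum_Ico_eq_sum_range]
      have hcons := range_Ico_split a t K (le_of_lt h)
      have hd := hdom K hK
      have hmin : min K t = t := by omega
      rw [hmin] at hd
      rw [hmt, htail]
      linarith
  | succ d ih =>
    intro m hm hKm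
    have hmt : m < t := by omega
    have hmK : m < K := by omega
    have hK1 : 1 ≤ K := by omega
    obtain ⟨r, hr⟩ : ∃ r, r = t + (K - m) := ⟨_, rfl⟩
    have hrn : r ≤ n := by omega
    have htr : t + 1 ≤ r := by omega
    have hKr : K + 1 ≤ r := by omega
    have htail : ∑ i ∈ Finset.range (K - m), a (t + i) = ∑ i ∈ Finset.Ico t r, a i := by
      have hrt : r - t = K - m := by omega
      rw [Finset.sum_Ico_eq_sum_range, hrt]
    have htail' : ∑ i ∈ Finset.range (K - (m+1)), a (t + i)
        = ∑ i ∈ Finset.Ico t (r-1), a i := by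
      have hrt : r - 1 - t = K - (m+1) := by omega
      rw [Finset.sum_Ico_eq_sum_range, hrt]
    have hsplitIco : ∑ i ∈ Finset.Ico t r, a i
        = ∑ i ∈ Finset.Ico t (r-1), a i + a (r-1) := by
      have h1 : r = (r-1) + 1 := by omega
      rw [h1, Finset.sum_Ico_succ_top (by omega)]
      congr 2 <;> omega
    have hArange : ∑ i ∈ Finset.range (m+1), a i = ∑ i ∈ Finset.range m, a i + a m :=
      Finset.sum_range_succ a m
    have hihm := ih (m+1) (by omega) (by omega)
    have hamr : a (r-1) ≤ a m := ha m (r-1) (by omega) (by omega)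
    rcases le_or_gt (a (r-1) + 1) (a m) with hcase | hcase
    · rw [htail'] at hihm
      rw [hArange] at hihm
      rw [htail, hsplitIco]
      push_cast at hihm ⊢
      linarith
    · have hceq : a m = a (r-1) := by omega
      have hconst : ∀ i, m ≤ i → i < r → a i = a m := by
        intro i h1 h2
        have h3 : a i ≤ a m := ha m i h1 (by omega)
        have h4 : a (r-1) ≤ a i := ha i (r-1) (by omega) (by omega)
        omega
      have hsum_tr : ∑ i ∈ Finset.Ico t r, a i = ((K - m : ℕ) : ℤ) * a m := by
        rw [Finset.sum_congr rfl (fun i hi => hconst i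
            (by have := Finset.mem_Ico.1 hi; omega) (Finset.mem_Ico.1 hi).2)]
        rw [Finset.sum_const, Nat.card_Ico, nsmul_eq_mul]
        congr 2
        omega
      have hsum_mr : ∑ i ∈ Finset.Ico m r, a i = ((r - m : ℕ) : ℤ) * a m := by
        rw [Finset.sum_congr rfl (fun i hi => hconst i (Finset.mem_Ico.1 hi).1
            (Finset.mem_Ico.1 hi).2)]
        rw [Finset.sum_const, Nat.card_Ico, nsmul_eq_mul]
      have hAr := range_Ico_split a m r (by omega)
      rcases le_or_gt (a m) (u (K-1)) with hcu | hcu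
      · have hAm := hdom m (by omega)
        have hminm : min m t = m := by omega
        rw [hminm] at hAm
        have huK : ((K - m : ℕ) : ℤ) * u (K-1) ≤ ∑ i ∈ Finset.Ico m K, u i := by
          have h5 := Finset.card_nsmul_le_sum (Finset.Ico m K) u (u (K-1))
            (fun i hi => hu i (K-1) (by have := Finset.mem_Ico.1 hi; omega) (by omega))
          rwa [Nat.card_Ico, nsmul_eq_mul] at h5
        have hUK := range_Ico_split u m K (by omega)
        have hmul : ((K - m : ℕ) : ℤ) * a m ≤ ((K - m : ℕ) : ℤ) * u (K-1) :=
          mul_le_mul_of_nonneg_left hcu (by positivity)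
        rw [htail, hsum_tr]
        linarith
      · have hArdom := hdom r hrn
        have hminr : min r t = t := by omega
        rw [hminr] at hArdom
        have huK : ∑ i ∈ Finset.Ico K r, u i ≤ ((r - K : ℕ) : ℤ) * u (K-1) := by
          have h5 := Finset.sum_le_card_nsmul (Finset.Ico K r) u (u (K-1))
            (fun i hi => hu (K-1) i (by have := Finset.mem_Ico.1 hi; omega)
              (by have := Finset.mem_Ico.1 hi; omega))
          rwa [Nat.card_Ico, nsmul_eq_mul] at h5
        have hUK := range_Ico_split u K r (by omega)
        have hmul : ((r - K : ℕ) : ℤ) * u (K-1) ≤ ((r - K : ℕ) : ℤ) * (a m - 1) :=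
          mul_le_mul_of_nonneg_left (by omega) (by positivity)
        have e1c : ((r - m : ℕ) : ℤ) * a m
            = ((r - K : ℕ) : ℤ) * a m + ((K - m : ℕ) : ℤ) * a m := by
          have e1 : ((r - m : ℕ) : ℤ) = ((r - K : ℕ) : ℤ) + ((K - m : ℕ) : ℤ) := by
            rw [Nat.cast_sub (by omega : m ≤ r), Nat.cast_sub (by omega : K ≤ r),
              Nat.cast_sub (by omega : m ≤ K)]
            ring
          rw [e1]; ring
        have hmul' : ((r - K : ℕ) : ℤ) * (a m - 1)
            = ((r - K : ℕ) : ℤ) * a m - ((r - K : ℕ) : ℤ) := by ring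
        have e2 : ((r - K : ℕ) : ℤ) = (t : ℤ) - (m : ℤ) := by
          rw [Nat.cast_sub (by omega : K ≤ r)]
          have h6 : (r : ℤ) = (t : ℤ) + ((K : ℤ) - (m : ℤ)) := by
            rw [hr]; push_cast [Nat.cast_sub (le_of_lt hmK)]; ring
          linarith
        rw [htail, hsum_tr]
        linarith

def natize {n : ℕ} (f : Fin n → ℤ) : ℕ → ℤ := fun i => if h : i < n then f ⟨i, h⟩ else 0

lemma natize_val {n : ℕ} (f : Fin n → ℤ) (i : Fin n) : natize f i.val = f i := by
  simp [natize, i.isLt]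

lemma sum_Iic_natize {n : ℕ} (f : Fin n → ℤ) (k : Fin n) :
    ∑ i ∈ Finset.Iic k, f i = ∑ i ∈ Finset.range (k.val + 1), natize f i := by
  have h1 : Finset.range (k.val + 1) = Finset.Iic k.val := by
    ext i; simp [Nat.lt_succ_iff]
  rw [h1, ← Fin.map_valEmbedding_Iic, Finset.sum_map]
  exact Finset.sum_congr rfl fun i _ => (natize_val f i).symm

lemma sum_univ_natize {n : ℕ} (f : Fin n → ℤ) :
    ∑ i, f i = ∑ i ∈ Finset.range n, natize f i := by
  rw [← Fin.sum_univ_eq_sum_range (natize f) n]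
  exact Finset.sum_congr rfl fun i _ => (natize_val f i).symm

lemma sum_finset_natize {n : ℕ} (f : Fin n → ℤ) (S : Finset (Fin n)) :
    ∑ i ∈ S, f i = ∑ j ∈ S.image Fin.val, natize f j := by
  rw [Finset.sum_image (fun x _ y _ h => Fin.val_injective h)]
  exact Finset.sum_congr rfl fun i _ => (natize_val f i).symm

theorem dom_subtract (n : ℕ) (hn : 1 ≤ n) (t : ℕ) (ht : 1 ≤ t) (htn : t ≤ n - 1)
    (μ lam lam' : Fin n → ℤ)
    (hμ : IsDominant μ) (hlam : IsDominant lam) (hlam' : IsDominant lam')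
    (heq : ∀ j, lam j = μ j + varpi n t j)
    (hle : DomLE lam' lam) :
    DomLE (domOf (fun j => lam' j - varpi n t j)) μ := by
  have htn' : t + 1 ≤ n := by omega
  set v : Fin n → ℤ := fun j => lam' j - varpi n t j with hv
  set σ : Equiv.Perm (Fin n) := Tuple.sort (fun i => -v i) with hσ
  set a : ℕ → ℤ := natize lam' with haev
  set u : ℕ → ℤ := natize μ with huev
  have ha : ∀ i j : ℕ, i ≤ j → j < n → a j ≤ a i := by
    intro i j hij hj
    have hi : i < n := lt_of_le_of_lt hij hj
    simp only [haev, natize, dif_pos hi, dif_pos hj]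
    exact hlam' ⟨i, hi⟩ ⟨j, hj⟩ hij
  have hu : ∀ i j : ℕ, i ≤ j → j < n → u j ≤ u i := by
    intro i j hij hj
    have hi : i < n := lt_of_le_of_lt hij hj
    simp only [huev, natize, dif_pos hi, dif_pos hj]
    exact hμ ⟨i, hi⟩ ⟨j, hj⟩ hij
  have hdom' : ∀ k, k ≤ n →
      ∑ i ∈ Finset.range k, a i ≤ (∑ i ∈ Finset.range k, u i) + ((min k t : ℕ) : ℤ) := by
    intro k hk
    rcases Nat.eq_zero_or_pos k with rfl | hk0
    · simp
    · obtain ⟨j, rfl⟩ : ∃ j, k = j + 1 := ⟨k - 1, by omega⟩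
      have hj : j < n := by omega
      have e1 : ∑ i ∈ Finset.range (j+1), a i
          = ∑ i ∈ Finset.Iic (⟨j, hj⟩ : Fin n), lam' i := (sum_Iic_natize lam' ⟨j, hj⟩).symm
      have e2 : ∑ i ∈ Finset.Iic (⟨j, hj⟩ : Fin n), lam i
          = ∑ i ∈ Finset.range (j+1), (u i + if i < t then (1:ℤ) else 0) := by
        rw [sum_Iic_natize lam ⟨j, hj⟩]
        refine Finset.sum_congr rfl fun i hi => ?_
        have hi' : i < n := by have := Finset.mem_range.1 hi; omega
        simp [natize, hi', heq, varpi, huev]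
      have e3 := hle.2 ⟨j, hj⟩
      rw [Finset.sum_add_distrib, ind_sum] at e2
      rw [e1]
      linarith
  have claim : ∀ S : Finset (Fin n), S.card ≤ n →
      ∑ j ∈ S, v j ≤ ∑ i ∈ Finset.range S.card, u i := by
    intro S hScard
    have hTcard : (S.image Fin.val).card = S.card :=
      Finset.card_image_of_injective S Fin.val_injective
    rw [sum_finset_natize, ← hTcard]
    set T := S.image Fin.val with hT
    have hTsub : ∀ j ∈ T, j < n := by
      intro j hj
      rcases Finset.mem_image.1 hj with ⟨i, _, rfl⟩
      exact i.isLt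
    have hvT : ∀ j ∈ T, natize v j = a j - (if j < t then (1:ℤ) else 0) := by
      intro j hj
      have hjn := hTsub j hj
      simp [natize, hjn, hv, varpi, haev]
    rw [Finset.sum_congr rfl hvT, Finset.sum_sub_distrib]
    have hind : ∑ j ∈ T, (if j < t then (1:ℤ) else 0)
        = (((T.filter (fun j => j < t)).card : ℕ) : ℤ) := by
      simp [Finset.sum_boole]
    set m := (T.filter (fun j => j < t)).card with hmdef
    have hcards : m + (T.filter (fun j => ¬ j < t)).card = T.card :=
      Finset.card_filter_add_card_filter_not _
    have hmt : m ≤ t := by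
      have hsub : T.filter (fun j => j < t) ⊆ Finset.range t := by
        intro j hj
        simp only [Finset.mem_filter] at hj
        exact Finset.mem_range.2 hj.2
      simpa [hmdef] using Finset.card_le_card hsub
    have hT2sub : ∀ j ∈ T.filter (fun j => ¬ j < t), t ≤ j ∧ j < n := by
      intro j hj
      simp only [Finset.mem_filter] at hj
      exact ⟨by omega, hTsub j hj.1⟩
    have hT2card : (T.filter (fun j => ¬ j < t)).card ≤ n - t := by
      have hsub : T.filter (fun j => ¬ j < t) ⊆ Finset.Ico t n := by
        intro j hj
        exact Finset.mem_Ico.2 (hT2sub j hj)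
      have := Finset.card_le_card hsub
      simpa [Nat.card_Ico] using this
    have hKn : T.card ≤ n := by rw [hTcard]; exact hScard
    have h1 := sum_subset_le_initial a 0 n ha (T.filter (fun j => j < t))
      (fun j hj => ⟨Nat.zero_le _, hTsub j (Finset.mem_of_mem_filter _ hj)⟩)
    simp only [Nat.zero_add] at h1
    have h2 := sum_subset_le_initial a t n ha (T.filter (fun j => ¬ j < t)) hT2sub
    have hsplita : ∑ j ∈ T, a j
        = ∑ j ∈ T.filter (fun j => j < t), a j + ∑ j ∈ T.filter (fun j => ¬ j < t), a j :=
      (Finset.sum_filter_add_sum_filter_not T _ a).symm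
    have h3 := main_ineq n t a u ht htn' ha hu hdom' T.card hKn
      (min T.card t - m) m (by omega) (by omega)
    have hKm : T.card - m = (T.filter (fun j => ¬ j < t)).card := by omega
    rw [hKm] at h3
    rw [hind]
    linarith
  constructor
  · have h1 : ∑ i, domOf v i = ∑ i, v i := Equiv.sum_comp σ v
    rw [h1]
    have h2 : ∑ i, v i = ∑ i, lam' i - ∑ i, varpi n t i := by
      rw [← Finset.sum_sub_distrib]
    have h3 : ∑ i, lam i = ∑ i, μ i + ∑ i, varpi n t i := by
      rw [← Finset.sum_add_distrib]
      exact Finset.sum_congr rfl (fun i _ => heq i)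
    have h4 := hle.1
    rw [h2]
    linarith
  · intro k
    have himg : ∑ i ∈ Finset.Iic k, domOf v i = ∑ j ∈ (Finset.Iic k).image σ, v j := by
      rw [Finset.sum_image (fun x _ y _ h => σ.injective h)]
      rfl
    have hcard : ((Finset.Iic k).image σ).card = k.val + 1 := by
      rw [Finset.card_image_of_injective _ σ.injective, Fin.card_Iic]
    have h4 := claim ((Finset.Iic k).image σ) (by rw [hcard]; omega)
    rw [hcard] at h4
    rw [himg, sum_Iic_natize μ k]
    exact h4
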